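/- Let q̃(a, b) = (a² + b² + ab)/2 for integers a, b. Then the Gauss sum Σ_{(a,b) ∈ {0,1}²} exp(2πi · q̃(a, b)) equals −2, i.e. it equals 2 · exp(2πi · 4/8). Consequently the Brown–Kervaire invariant β(q) of the quadratic ℤ/2-linking form q(a, b) = (a² + b² + ab)/2 mod ℤ, defined by the equation Σ_{v ∈ (ℤ/2)²} exp(2πi · q(v)) = |(ℤ/2)²|^{1/2} · exp(2πi · β(q)/8), equals 4 ∈ ℤ/8. -/
import Mathlib


open scoped BigOperators

/-- The Gauss sum term `exp(2πi·(a² + b² + ab)/2)` attached to `v = (a, b) ∈ (ℤ/2)²`,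
computed using the representatives `a, b ∈ {0, 1}`. -/
noncomputable def gaussTerm (v : ZMod 2 × ZMod 2) : ℂ :=
  Complex.exp (2 * Real.pi * Complex.I *
    (((v.1.val : ℂ) ^ 2 + (v.2.val : ℂ) ^ 2 + (v.1.val : ℂ) * (v.2.val : ℂ)) / 2))

lemma exp_half' : Complex.exp (2 * Real.pi * Complex.I * (1 / 2)) = -1 := by
  have h : (2 * (Real.pi : ℂ) * Complex.I * (1 / 2)) = Real.pi * Complex.I := by ring
  rw [h, Complex.exp_pi_mul_I]

lemma exp_three_half' : Complex.exp (2 * Real.pi * Complex.I * (3 / 2)) = -1 := by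
  have h : (2 * (Real.pi : ℂ) * Complex.I * (3 / 2))
      = Real.pi * Complex.I + 2 * Real.pi * Complex.I := by ring
  rw [h, Complex.exp_add, Complex.exp_pi_mul_I, Complex.exp_two_pi_mul_I, mul_one]

lemma gauss_sum_eq' : (∑ v : ZMod 2 × ZMod 2, gaussTerm v) = -2 := by
  rw [Fintype.sum_prod_type]
  show ∑ a : Fin 2, ∑ b : Fin 2, gaussTerm (a, b) = -2
  rw [Fin.sum_univ_two, Fin.sum_univ_two, Fin.sum_univ_two]
  have h00 : gaussTerm ((0 : Fin 2), (0 : Fin 2)) = 1 := by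
    simp [gaussTerm, ZMod.val]
  have h01 : gaussTerm ((0 : Fin 2), (1 : Fin 2)) = -1 := by
    have : gaussTerm ((0 : Fin 2), (1 : Fin 2))
        = Complex.exp (2 * Real.pi * Complex.I * (1 / 2)) := by
      simp [gaussTerm, ZMod.val]
    rw [this, exp_half']
  have h10 : gaussTerm ((1 : Fin 2), (0 : Fin 2)) = -1 := by
    have : gaussTerm ((1 : Fin 2), (0 : Fin 2))
        = Complex.exp (2 * Real.pi * Complex.I * (1 / 2)) := by
      simp [gaussTerm, ZMod.val]
    rw [this, exp_half']
  have h11 : gaussTerm ((1 : Fin 2), (1 : Fin 2)) = -1 := by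
    have : gaussTerm ((1 : Fin 2), (1 : Fin 2))
        = Complex.exp (2 * Real.pi * Complex.I * (3 / 2)) := by
      simp [gaussTerm, ZMod.val]
      ring_nf
    rw [this, exp_three_half']
  rw [h00, h01, h10, h11]; ring

lemma sqrt_card' : (Real.sqrt (Fintype.card (ZMod 2 × ZMod 2)) : ℝ) = 2 := by
  have : (Fintype.card (ZMod 2 × ZMod 2) : ℝ) = 4 := by simp
  rw [this, show (4:ℝ) = 2^2 by norm_num, Real.sqrt_sq (by norm_num)]

/-- The Gauss sum `Σ_{(a,b) ∈ {0,1}²} exp(2πi·(a² + b² + ab)/2)` equals `−2`, which equals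
`2·exp(2πi·4/8)`; consequently the Brown–Kervaire invariant `β(q) ∈ ℤ/8` of the quadratic
linking form `q(a,b) = (a² + b² + ab)/2 mod ℤ` on `(ℤ/2)²`, defined by the equation
`Σ_v exp(2πi·q(v)) = |(ℤ/2)²|^{1/2}·exp(2πi·β(q)/8)`, equals `4`. -/
theorem brownKervaire_arf_form :
    (∑ v : ZMod 2 × ZMod 2, gaussTerm v) = -2 ∧
    (-2 : ℂ) = 2 * Complex.exp (2 * Real.pi * Complex.I * (4 / 8)) ∧
    ∀ β : ZMod 8,
      ((∑ v : ZMod 2 × ZMod 2, gaussTerm v) =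
        (Real.sqrt (Fintype.card (ZMod 2 × ZMod 2)) : ℂ) *
          Complex.exp (2 * Real.pi * Complex.I * ((β.val : ℂ) / 8))) ↔ β = 4 := by
  have hsqrt : ((Real.sqrt (Fintype.card (ZMod 2 × ZMod 2)) : ℝ) : ℂ) = 2 := by
    rw [sqrt_card']; norm_num
  have hhalf : (-2 : ℂ) = 2 * Complex.exp (2 * Real.pi * Complex.I * (4 / 8)) := by
    rw [show ((4 : ℂ) / 8) = 1 / 2 by norm_num, exp_half']; ring
  refine ⟨gauss_sum_eq', hhalf, fun β => ⟨fun h => ?_, fun h => ?_⟩⟩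
  · rw [gauss_sum_eq', hsqrt] at h
    have hexp : Complex.exp (2 * Real.pi * Complex.I * ((β.val : ℂ) / 8))
        = Complex.exp (Real.pi * Complex.I) := by
      rw [Complex.exp_pi_mul_I]
      linear_combination -h / 2
    rw [Complex.exp_eq_exp_iff_exists_int] at hexp
    obtain ⟨n, hn⟩ := hexp
    have hI : (Real.pi : ℂ) * Complex.I ≠ 0 := by
      simp [Real.pi_ne_zero, Complex.I_ne_zero]
    have h2 : ((Real.pi : ℂ) * Complex.I) * ((β.val : ℂ) - 4 - 8 * n) = 0 := by
      linear_combination 4 * hn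
    have h3 : (β.val : ℂ) - 4 - 8 * n = 0 := by
      rcases mul_eq_zero.mp h2 with h | h
      · exact absurd h hI
      · exact h
    have h4 : (β.val : ℂ) = ((4 + 8 * n : ℤ) : ℂ) := by
      push_cast; linear_combination h3
    have h5 : (β.val : ℤ) = 4 + 8 * n := by exact_mod_cast h4
    have h6 : β.val < 8 := β.val_lt
    have h7 : β.val = 4 := by omega
    calc β = (β.val : ZMod 8) := (ZMod.natCast_rightInverse β).symm
      _ = 4 := by rw [h7]; rfl
  · subst h
    rw [gauss_sum_eq', hsqrt,
      show (((4 : ZMod 8).val : ℂ)) = 4 from by rfl, hhalf]
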